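/- Let E : S → C and A : C → S be linear operators between finite-dimensional Hilbert spaces with dim S ≥ dim C, ρ a density operator on S with |tr(AEρ)|² ≥ 1 - η, A†A ≤ I, and tr(EρE†) = 1. Then there exists a maximal partial isometry W : S → C (W W† = I_C) such that |tr(AWρ)|² ≥ 1 - 2η. -/

import Mathlib

set_option linter.unusedSectionVars false

open Matrix
open scoped ComplexOrder
open scoped MatrixOrder

namespace Stmt18Aux

lemma diag_nonneg {m : Type*} [Fintype m] [DecidableEq m]
    {M : Matrix m m ℂ} (hM : M.PosSemidef) (i : m) : 0 ≤ M i i := by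
  exact hM.diag_nonneg


variable {m n : Type*} [Fintype m] [Fintype n] [DecidableEq m] [DecidableEq n]

lemma trace_nonneg {M : Matrix m m ℂ} (hM : M.PosSemidef) : 0 ≤ M.trace :=
  Finset.sum_nonneg fun i _ => diag_nonneg hM i

lemma trace_mul_nonneg {M N : Matrix m m ℂ} (hM : M.PosSemidef) (hN : N.PosSemidef) :
    0 ≤ (M * N).trace := by
  have h1 : M * N = M * CFC.sqrt N * CFC.sqrt N := by rw [Matrix.mul_assoc, CFC.sqrt_mul_sqrt_self N hN.nonneg]
  have h2 : (M * CFC.sqrt N * CFC.sqrt N).trace = (CFC.sqrt N * M * CFC.sqrt N).trace := by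
    rw [Matrix.trace_mul_cycle]
  have h3 : ((CFC.sqrt N)ᴴ * M * CFC.sqrt N).PosSemidef := hM.conjTranspose_mul_mul_same _
  rw [(CFC.sqrt_nonneg N).posSemidef.1] at h3
  rw [h1, h2]
  exact trace_nonneg h3

lemma trace_schwarz (X Y : Matrix m n ℂ) :
    ‖(Xᴴ * Y).trace‖ ^ 2 ≤ (Xᴴ * X).trace.re * (Yᴴ * Y).trace.re := by
  classical
  have hin : ∀ (P Q : Matrix m n ℂ),
      (inner ℂ ((WithLp.equiv 2 _).symm (fun p : m × n => P p.1 p.2))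
        ((WithLp.equiv 2 _).symm (fun p : m × n => Q p.1 p.2)) : ℂ) = (Pᴴ * Q).trace := by
    intro P Q
    have key : (Pᴴ * Q).trace = ∑ p : m × n, starRingEnd ℂ (P p.1 p.2) * Q p.1 p.2 := by
      rw [Fintype.sum_prod_type, Matrix.trace, Finset.sum_comm]
      simp [Matrix.diag, Matrix.mul_apply, Matrix.conjTranspose_apply]
    rw [key]; exact (by rw [PiLp.inner_apply]; exact Finset.sum_congr rfl fun _ _ => RCLike.inner_apply' _ _)
  have hnorm : ∀ P : Matrix m n ℂ,
      ‖(WithLp.equiv 2 (m × n → ℂ)).symm (fun p : m × n => P p.1 p.2)‖ ^ 2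
        = (Pᴴ * P).trace.re := by
    intro P
    rw [← inner_self_eq_norm_sq (𝕜 := ℂ), hin P P]
    rfl
  have h1 := norm_inner_le_norm (𝕜 := ℂ)
    ((WithLp.equiv 2 (m × n → ℂ)).symm (fun p : m × n => X p.1 p.2))
    ((WithLp.equiv 2 (m × n → ℂ)).symm (fun p : m × n => Y p.1 p.2))
  have h2 := pow_le_pow_left₀ (norm_nonneg _) h1 2
  rw [mul_pow, hnorm X, hnorm Y, hin X Y] at h2
  exact h2



lemma exists_polar {s c : ℕ} (hdim : c ≤ s) (A : Matrix (Fin s) (Fin c) ℂ)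
    (hA : (1 - Aᴴ * A).PosSemidef) :
    ∃ (U : Matrix (Fin s) (Fin c) ℂ) (V : Matrix (Fin c) (Fin c) ℂ) (g : Fin c → ℝ),
      Uᴴ * U = 1 ∧ Vᴴ * V = 1 ∧ V * Vᴴ = 1 ∧ (∀ k, 0 ≤ g k) ∧ (∀ k, g k ≤ 1) ∧
      A = U * Matrix.diagonal (fun k => (g k : ℂ)) * Vᴴ := by
  classical
  set B := Aᴴ * A with hBdef
  have hB : B.PosSemidef := Matrix.posSemidef_conjTranspose_mul_self A
  have hH : B.IsHermitian := hB.1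
  set V : Matrix (Fin c) (Fin c) ℂ := (hH.eigenvectorUnitary : Matrix (Fin c) (Fin c) ℂ) with hVdef
  set d : Fin c → ℝ := hH.eigenvalues with hddef
  have hVV : Vᴴ * V = 1 := by
    rw [← Matrix.star_eq_conjTranspose]
    exact Matrix.mem_unitaryGroup_iff'.mp hH.eigenvectorUnitary.2
  have hVV' : V * Vᴴ = 1 := by
    rw [← Matrix.star_eq_conjTranspose]
    exact Matrix.mem_unitaryGroup_iff.mp hH.eigenvectorUnitary.2
  have hspec : Vᴴ * B * V = Matrix.diagonal (fun k => ((d k : ℝ) : ℂ)) := by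
    rw [← Matrix.star_eq_conjTranspose]
    have h := hH.conjStarAlgAut_star_eigenvectorUnitary
    rw [Unitary.conjStarAlgAut_star_apply] at h
    exact h
  have hd0 : ∀ k, 0 ≤ d k := hB.eigenvalues_nonneg
  have hd1 : ∀ k, d k ≤ 1 := by
    intro k
    have hps : (Vᴴ * (1 - B) * V).PosSemidef := hA.conjTranspose_mul_mul_same V
    have heq : Vᴴ * (1 - B) * V = 1 - Matrix.diagonal (fun k => ((d k : ℝ) : ℂ)) := by
      rw [Matrix.mul_sub, Matrix.mul_one, Matrix.sub_mul, hVV, hspec]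
    rw [heq] at hps
    have hdg := diag_nonneg hps k
    have : (1 - Matrix.diagonal (fun k => ((d k : ℝ) : ℂ))) k k = ((1 - d k : ℝ) : ℂ) := by
      simp [Matrix.one_apply, Matrix.diagonal_apply]
    rw [this] at hdg
    have := Complex.le_def.mp hdg |>.1
    simpa using this
  set g : Fin c → ℝ := fun k => Real.sqrt (d k) with hgdef
  have hg0 : ∀ k, 0 ≤ g k := fun k => Real.sqrt_nonneg _
  have hg1 : ∀ k, g k ≤ 1 := fun k => Real.sqrt_le_one.mpr (hd1 k)
  have hgg : ∀ k, g k * g k = d k := fun k => Real.mul_self_sqrt (hd0 k)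
  set N : Matrix (Fin s) (Fin c) ℂ := A * V with hNdef
  have hNN : Nᴴ * N = Matrix.diagonal (fun k => ((d k : ℝ) : ℂ)) := by
    rw [hNdef, Matrix.conjTranspose_mul, ← hspec, hBdef]
    simp only [Matrix.mul_assoc]
  have hip : ∀ (k l : Fin c),
      (∑ i, starRingEnd ℂ (N i k) * N i l) = Matrix.diagonal (fun k => ((d k : ℝ) : ℂ)) k l := by
    intro k l
    rw [← hNN]
    simp [Matrix.mul_apply, Matrix.conjTranspose_apply]
  -- columns with d k = 0 vanish
  have hcolzero : ∀ k, d k = 0 → ∀ i, N i k = 0 := by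
    intro k hdk i
    have h0 : (∑ i, starRingEnd ℂ (N i k) * N i k) = 0 := by
      rw [hip k k]; simp [Matrix.diagonal_apply_eq, hdk]
    have h1 : (∑ i, (Complex.normSq (N i k) : ℂ)) = 0 := by
      rw [← h0]
      exact Finset.sum_congr rfl fun i _ => (Complex.normSq_eq_conj_mul_self).symm ▸ rfl
    have h2 : (∑ i, Complex.normSq (N i k)) = 0 := by
      exact_mod_cast h1
    have h3 : Complex.normSq (N i k) = 0 :=
      (Finset.sum_eq_zero_iff_of_nonneg fun i _ => Complex.normSq_nonneg _).mp h2 i (by simp)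
    exact Complex.normSq_eq_zero.mp h3
  -- the orthonormal family
  set vfam : Fin s → EuclideanSpace ℂ (Fin s) := fun j =>
    if h : (j : ℕ) < c then
      (WithLp.equiv 2 _).symm (fun i => ((g ⟨j, h⟩ : ℂ))⁻¹ * N i ⟨j, h⟩)
    else 0 with hvfam
  set S₀ : Set (Fin s) := {j | ∃ h : (j : ℕ) < c, d ⟨j, h⟩ ≠ 0} with hS₀
  have hinner : ∀ (a b : Fin c),
      (∑ i, starRingEnd ℂ (((g a : ℂ))⁻¹ * N i a) * (((g b : ℂ))⁻¹ * N i b))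
        = ((g a : ℂ))⁻¹ * (((g b : ℂ))⁻¹ * Matrix.diagonal (fun k => ((d k : ℝ) : ℂ)) a b) := by
    intro a b
    rw [← hip a b, Finset.mul_sum, Finset.mul_sum]
    refine Finset.sum_congr rfl fun i _ => ?_
    rw [_root_.map_mul, map_inv₀, Complex.conj_ofReal]
    ring
  have horth : Orthonormal ℂ (S₀.restrict vfam) := by
    rw [orthonormal_iff_ite]
    rintro ⟨j, hj⟩ ⟨j', hj'⟩
    obtain ⟨h, hdj⟩ := hj
    obtain ⟨h', hdj'⟩ := hj'
    have e1 : vfam j = (WithLp.equiv 2 _).symm (fun i => ((g ⟨j, h⟩ : ℂ))⁻¹ * N i ⟨j, h⟩) := by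
      rw [hvfam]; exact dif_pos h
    have e2 : vfam j' = (WithLp.equiv 2 _).symm (fun i => ((g ⟨j', h'⟩ : ℂ))⁻¹ * N i ⟨j', h'⟩) := by
      rw [hvfam]; exact dif_pos h'
    show (inner ℂ (vfam j) (vfam j') : ℂ) = _
    rw [e1, e2]
    have : (inner ℂ ((WithLp.equiv 2 _).symm (fun i => ((g ⟨j, h⟩ : ℂ))⁻¹ * N i ⟨j, h⟩))
        ((WithLp.equiv 2 _).symm (fun i => ((g ⟨j', h'⟩ : ℂ))⁻¹ * N i ⟨j', h'⟩)) : ℂ)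
        = ∑ i, starRingEnd ℂ (((g ⟨j, h⟩ : ℂ))⁻¹ * N i ⟨j, h⟩)
            * (((g ⟨j', h'⟩ : ℂ))⁻¹ * N i ⟨j', h'⟩) := by
      exact (by rw [PiLp.inner_apply]; exact Finset.sum_congr rfl fun _ _ => RCLike.inner_apply' _ _)
    rw [this, hinner]
    simp only [Subtype.mk_eq_mk]
    by_cases hjj : j = j'
    · subst hjj
      rw [if_pos rfl]
      rw [show (⟨(j:ℕ), h'⟩ : Fin c) = ⟨(j:ℕ), h⟩ from rfl]
      rw [Matrix.diagonal_apply_eq]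
      have hgne : g ⟨j, h⟩ ≠ 0 := by
        rw [hgdef]
        exact Real.sqrt_ne_zero'.mpr (lt_of_le_of_ne (hd0 _) (Ne.symm hdj))
      have : ((g ⟨j, h⟩ : ℂ)) ≠ 0 := by exact_mod_cast hgne
      field_simp
      rw [sq, ← Complex.ofReal_mul, hgg]
    · have hab : (⟨(j:ℕ), h⟩ : Fin c) ≠ ⟨(j':ℕ), h'⟩ := by
        intro hcon
        have hval := congrArg Fin.val hcon
        exact hjj (Fin.ext hval)
      rw [Matrix.diagonal_apply_ne _ hab]
      rw [if_neg hjj]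
      simp
  have hcard : Module.finrank ℂ (EuclideanSpace ℂ (Fin s)) = Fintype.card (Fin s) := by
    simp
  obtain ⟨bas, hbas⟩ := horth.exists_orthonormalBasis_extension_of_card_eq hcard
  set U : Matrix (Fin s) (Fin c) ℂ := Matrix.of (fun i k => bas (Fin.castLE hdim k) i) with hUdef
  have hUU : Uᴴ * U = 1 := by
    ext k l
    rw [Matrix.mul_apply, Matrix.one_apply]
    have hb := orthonormal_iff_ite.mp bas.orthonormal (Fin.castLE hdim k) (Fin.castLE hdim l)
    have : (inner ℂ (bas (Fin.castLE hdim k)) (bas (Fin.castLE hdim l)) : ℂ)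
        = ∑ i, starRingEnd ℂ (bas (Fin.castLE hdim k) i) * bas (Fin.castLE hdim l) i := (by rw [PiLp.inner_apply]; exact Finset.sum_congr rfl fun _ _ => RCLike.inner_apply' _ _)
    rw [this] at hb
    simp only [Matrix.conjTranspose_apply, hUdef, Matrix.of_apply, Complex.star_def]
    rw [hb]
    simp [Fin.castLE_inj]
  have keymul : U * Matrix.diagonal (fun k => ((g k : ℝ) : ℂ)) = N := by
    ext i k
    rw [Matrix.mul_diagonal]
    by_cases hdk : d k = 0
    · have hgk : g k = 0 := by rw [hgdef]; simp [hdk]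
      rw [hgk, hcolzero k hdk i]
      simp
    · have hmem : (Fin.castLE hdim k) ∈ S₀ := by
        refine ⟨by simpa using k.isLt, ?_⟩
        convert hdk using 2
        exact Fin.ext rfl
      have hbk := hbas _ hmem
      have hcol : bas (Fin.castLE hdim k)
          = (WithLp.equiv 2 _).symm (fun i => ((g k : ℂ))⁻¹ * N i k) := by
        rw [hbk]
        simp only [hvfam]
        rw [dif_pos (by simpa using k.isLt : ((Fin.castLE hdim k : Fin s) : ℕ) < c)]
        rfl
      have hUik : U i k = ((g k : ℂ))⁻¹ * N i k := by
        rw [hUdef]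
        show bas (Fin.castLE hdim k) i = _
        rw [hcol]
        rfl
      rw [hUik]
      have hgne : ((g k : ℂ)) ≠ 0 := by
        have : g k ≠ 0 := by
          rw [hgdef]
          exact Real.sqrt_ne_zero'.mpr (lt_of_le_of_ne (hd0 _) (Ne.symm hdk))
        exact_mod_cast this
      field_simp
  refine ⟨U, V, g, hUU, hVV, hVV', hg0, hg1, ?_⟩
  rw [keymul, hNdef, Matrix.mul_assoc, hVV', Matrix.mul_one]



lemma real_final {a b η : ℝ} (ha0 : 0 ≤ a) (hb0 : 0 ≤ b) (hb1 : b ≤ 1)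
    (h : 1 - η ≤ a * b) : 1 - 2 * η ≤ a ^ 2 := by
  have ha : 1 - η ≤ a := by nlinarith
  rw [pow_two]
  rcases le_or_gt η 1 with hη | hη
  · have h2 : (1 - η) * (1 - η) ≤ a * a := mul_le_mul ha ha (by linarith) ha0
    nlinarith [sq_nonneg η]
  · nlinarith [mul_nonneg ha0 ha0]

end Stmt18Aux

open Stmt18Aux

open Matrix
open scoped ComplexOrder in
/-- Let `E : S → C` and `A : C → S` be linear operators between finite-dimensional
Hilbert spaces with `dim S ≥ dim C`, `ρ` a density operator on `S` with
`|tr(AEρ)|² ≥ 1 - η`, `A†A ≤ I`, and `tr(EρE†) = 1`.  Then there is a maximal partial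
isometry `W : S → C` (`W Wᴴ = I_C`) with `|tr(AWρ)|² ≥ 1 - 2η`. -/
theorem stmt_18 {s c : ℕ} (hdim : c ≤ s)
    (E : Matrix (Fin c) (Fin s) ℂ) (A : Matrix (Fin s) (Fin c) ℂ)
    (ρ : Matrix (Fin s) (Fin s) ℂ) (hρ : ρ.PosSemidef) (htr : ρ.trace = 1)
    (η : ℝ)
    (hAE : 1 - η ≤ ‖(A * E * ρ).trace‖ ^ 2)
    (hA : (1 - Aᴴ * A).PosSemidef)
    (hE : (E * ρ * Eᴴ).trace = 1) :
    ∃ W : Matrix (Fin c) (Fin s) ℂ, W * Wᴴ = 1 ∧ 1 - 2 * η ≤ ‖(A * W * ρ).trace‖ ^ 2 := by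
  classical
  obtain ⟨U, V, g, hUU, hVV, hVV', hg0, hg1, hApolar⟩ := exists_polar hdim A hA
  set D2 : Matrix (Fin c) (Fin c) ℂ := Matrix.diagonal (fun k => ((g k : ℝ) : ℂ)) with hD2def
  set D4 : Matrix (Fin c) (Fin c) ℂ :=
    Matrix.diagonal (fun k => ((Real.sqrt (g k) : ℝ) : ℂ)) with hD4def
  have hD : D4 * D4 = D2 := by
    rw [hD4def, hD2def, Matrix.diagonal_mul_diagonal]
    have e : (fun i => ((Real.sqrt (g i) : ℝ) : ℂ) * ((Real.sqrt (g i) : ℝ) : ℂ))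
        = fun i => ((g i : ℝ) : ℂ) :=
      funext fun k => by rw [← Complex.ofReal_mul, Real.mul_self_sqrt (hg0 k)]
    rw [e]
  have hD4h : D4ᴴ = D4 := by
    rw [hD4def, Matrix.diagonal_conjTranspose]
    have e : (star fun k => ((Real.sqrt (g k) : ℝ) : ℂ))
        = fun k => ((Real.sqrt (g k) : ℝ) : ℂ) :=
      funext fun k => Complex.conj_ofReal _
    rw [e]
  set R : Matrix (Fin s) (Fin s) ℂ := CFC.sqrt ρ with hRdef
  have hRR : R * R = ρ := CFC.sqrt_mul_sqrt_self ρ hρ.nonneg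
  have hRh : Rᴴ = R := (CFC.sqrt_nonneg ρ).posSemidef.1
  set W : Matrix (Fin c) (Fin s) ℂ := V * Uᴴ with hWdef
  have hWW : W * Wᴴ = 1 := by
    rw [hWdef, Matrix.conjTranspose_mul, Matrix.conjTranspose_conjTranspose,
      Matrix.mul_assoc, ← Matrix.mul_assoc Uᴴ U Vᴴ, hUU, Matrix.one_mul, hVV']
  set Q : Matrix (Fin s) (Fin s) ℂ := U * D2 * Uᴴ with hQdef
  have hAW : A * W = Q := by
    rw [hApolar, hWdef, hQdef]
    simp only [Matrix.mul_assoc]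
    rw [← Matrix.mul_assoc Vᴴ V Uᴴ, hVV, Matrix.one_mul]
  set T : Matrix (Fin c) (Fin c) ℂ := V * D2 * Vᴴ with hTdef
  set X : Matrix (Fin c) (Fin s) ℂ := D4 * Uᴴ * R with hXdef
  set Y : Matrix (Fin c) (Fin s) ℂ := D4 * Vᴴ * E * R with hYdef
  have hXc : Xᴴ = R * (U * D4) := by
    rw [hXdef]
    simp only [Matrix.conjTranspose_mul, Matrix.conjTranspose_conjTranspose, hRh, hD4h,
      Matrix.mul_assoc]
  have tr_conj : ∀ (P : Matrix (Fin s) (Fin s) ℂ), (R * (P * R)).trace = (P * ρ).trace := by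
    intro P
    rw [Matrix.trace_mul_comm, Matrix.mul_assoc, hRR]
  have hXY : Xᴴ * Y = R * ((A * E) * R) := by
    rw [hXc, hYdef, hApolar]
    simp only [Matrix.mul_assoc]
    rw [← Matrix.mul_assoc D4 D4, hD]
  have hXX : Xᴴ * X = R * (Q * R) := by
    rw [hXc, hXdef, hQdef]
    simp only [Matrix.mul_assoc]
    rw [← Matrix.mul_assoc D4 D4, hD]
  have hYY : Yᴴ * Y = R * ((Eᴴ * T * E) * R) := by
    rw [hYdef, hTdef]
    simp only [Matrix.conjTranspose_mul, Matrix.conjTranspose_conjTranspose, hRh, hD4h,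
      Matrix.mul_assoc]
    rw [← Matrix.mul_assoc D4 D4, hD]
  have t1 : (Xᴴ * Y).trace = (A * E * ρ).trace := by rw [hXY, tr_conj]
  have t2 : (Xᴴ * X).trace = (Q * ρ).trace := by rw [hXX, tr_conj]
  have t3 : (Yᴴ * Y).trace = (T * (E * ρ * Eᴴ)).trace := by
    rw [hYY, tr_conj]
    have e1 : (Eᴴ * T * E) * ρ = Eᴴ * (T * (E * ρ)) := by simp only [Matrix.mul_assoc]
    rw [e1, Matrix.trace_mul_comm]
    have e2 : (T * (E * ρ)) * Eᴴ = T * (E * ρ * Eᴴ) := by simp only [Matrix.mul_assoc]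
    rw [e2]
  -- positivity facts
  have hD2psd : D2.PosSemidef := by
    rw [hD2def]
    exact Matrix.PosSemidef.diagonal (fun k => by change (0:ℂ) ≤ _; exact_mod_cast hg0 k)
  have hD2psd' : (1 - D2 : Matrix (Fin c) (Fin c) ℂ).PosSemidef := by
    have : (1 - D2 : Matrix (Fin c) (Fin c) ℂ)
        = Matrix.diagonal (fun k => ((1 - g k : ℝ) : ℂ)) := by
      rw [hD2def, ← Matrix.diagonal_one, Matrix.diagonal_sub]
      congr 1
      funext k
      push_cast
      ring
    rw [this]
    exact Matrix.PosSemidef.diagonal (fun k => by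
      have h : (0:ℝ) ≤ 1 - g k := by linarith [hg1 k]
      change (0:ℂ) ≤ _
      exact_mod_cast h)
  have hQpsd : Q.PosSemidef := hD2psd.mul_mul_conjTranspose_same U
  have hProj : ((1 : Matrix (Fin s) (Fin s) ℂ) - U * Uᴴ).PosSemidef := by
    have hPP : (U * Uᴴ) * (U * Uᴴ) = U * Uᴴ := by
      rw [Matrix.mul_assoc, ← Matrix.mul_assoc Uᴴ U Uᴴ, hUU, Matrix.one_mul]
    have hPh : (U * Uᴴ)ᴴ = U * Uᴴ := by
      rw [Matrix.conjTranspose_mul, Matrix.conjTranspose_conjTranspose]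
    have hC : (1 - U * Uᴴ : Matrix (Fin s) (Fin s) ℂ)
        = (1 - U * Uᴴ) * (1 - U * Uᴴ)ᴴ := by
      rw [Matrix.conjTranspose_sub, Matrix.conjTranspose_one, hPh]
      rw [Matrix.mul_sub, Matrix.mul_one, Matrix.sub_mul, Matrix.one_mul, hPP]
      abel
    rw [hC]
    exact Matrix.posSemidef_self_mul_conjTranspose _
  have hQ1 : ((1 : Matrix (Fin s) (Fin s) ℂ) - Q).PosSemidef := by
    have h2 : (U * (1 - D2) * Uᴴ).PosSemidef := hD2psd'.mul_mul_conjTranspose_same U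
    have hsum : (1 : Matrix (Fin s) (Fin s) ℂ) - Q
        = ((1 : Matrix (Fin s) (Fin s) ℂ) - U * Uᴴ) + U * (1 - D2) * Uᴴ := by
      have e : U * (1 - D2) * Uᴴ = U * Uᴴ - Q := by
        rw [Matrix.mul_sub, Matrix.mul_one, Matrix.sub_mul, hQdef]
      rw [e, sub_add_sub_cancel]
    rw [hsum]
    exact hProj.add h2
  have hTpsd : T.PosSemidef := hD2psd.mul_mul_conjTranspose_same V
  have hT1 : ((1 : Matrix (Fin c) (Fin c) ℂ) - T).PosSemidef := by
    have e : (1 : Matrix (Fin c) (Fin c) ℂ) - T = V * (1 - D2) * Vᴴ := by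
      rw [Matrix.mul_sub, Matrix.mul_one, Matrix.sub_mul, hVV', hTdef]
    rw [e]
    exact hD2psd'.mul_mul_conjTranspose_same V
  have hEρE : (E * ρ * Eᴴ).PosSemidef := by
    have e : E * ρ * Eᴴ = (E * R) * (E * R)ᴴ := by
      rw [Matrix.conjTranspose_mul, hRh]
      simp only [Matrix.mul_assoc]
      rw [← Matrix.mul_assoc R R Eᴴ, hRR]
    rw [e]
    exact Matrix.posSemidef_self_mul_conjTranspose _
  -- complex-order trace bounds
  have c1 : (0:ℂ) ≤ (Q * ρ).trace := trace_mul_nonneg hQpsd hρ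
  have c2 : (0:ℂ) ≤ 1 - (Q * ρ).trace := by
    have h := trace_mul_nonneg hQ1 hρ
    rwa [Matrix.sub_mul, Matrix.one_mul, Matrix.trace_sub, htr] at h
  have c3 : (0:ℂ) ≤ (T * (E * ρ * Eᴴ)).trace := trace_mul_nonneg hTpsd hEρE
  have c4 : (0:ℂ) ≤ 1 - (T * (E * ρ * Eᴴ)).trace := by
    have h := trace_mul_nonneg hT1 hEρE
    rwa [Matrix.sub_mul, Matrix.one_mul, Matrix.trace_sub, hE] at h
  -- pass to real numbers
  set t : ℂ := (Q * ρ).trace with htdef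
  set y : ℂ := (T * (E * ρ * Eᴴ)).trace with hydef
  have ht0 : 0 ≤ t.re := (Complex.le_def.mp c1).1
  have htim : t.im = 0 := ((Complex.le_def.mp c1).2).symm
  have ht1 : t.re ≤ 1 := by
    have := (Complex.le_def.mp c2).1
    simp only [Complex.sub_re, Complex.one_re, Complex.zero_re] at this
    linarith
  have hy0 : 0 ≤ y.re := (Complex.le_def.mp c3).1
  have hy1 : y.re ≤ 1 := by
    have := (Complex.le_def.mp c4).1
    simp only [Complex.sub_re, Complex.one_re, Complex.zero_re] at this
    linarith
  -- Cauchy–Schwarz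
  have schwarz := trace_schwarz X Y
  rw [t1, t2, t3] at schwarz
  refine ⟨W, hWW, ?_⟩
  have hAWtr : (A * W * ρ).trace = t := by rw [hAW, htdef]
  rw [hAWtr]
  have hnorm : ‖t‖ ^ 2 = t.re ^ 2 := by
    have he : t = ((t.re : ℝ) : ℂ) := Complex.ext rfl (by simp [htim])
    rw [he, Complex.norm_real]
    exact sq_abs _
  rw [hnorm]
  exact real_final ht0 hy0 hy1 (le_trans hAE schwarz)
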